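/- Let ρ0, ρ1 be density matrices on ℂ^D and let {E_b}_{b=1}^n be a POVM. Then Σ_{b=1}^n √(Re tr(ρ0 E_b)) · √(Re tr(ρ1 E_b)) ≥ |tr(ρ0^{1/2} ρ1^{1/2})|. -/

import Mathlib

open Matrix
open scoped ComplexConjugate
open scoped ComplexOrder

/-- The positive semidefinite square root, as `Matrix.PosSemidef.sqrt` was defined in Mathlib
(Dec 2024); the declaration was removed from Mathlib since. -/
noncomputable def Matrix.PosSemidef.sqrt {n : Type*} [Fintype n] [DecidableEq n]
    {A : Matrix n n ℂ} (hA : A.PosSemidef) : Matrix n n ℂ :=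
  (hA.1.eigenvectorUnitary : Matrix n n ℂ) *
    diagonal (fun i => ((Real.sqrt (hA.1.eigenvalues i) : ℝ) : ℂ)) *
    (star hA.1.eigenvectorUnitary : Matrix n n ℂ)

lemma psd_sqrt_conjTranspose {n : Type*} [Fintype n] [DecidableEq n]
    {A : Matrix n n ℂ} (hA : A.PosSemidef) : hA.sqrtᴴ = hA.sqrt := by
  unfold Matrix.PosSemidef.sqrt
  simp [Matrix.conjTranspose_mul, Matrix.diagonal_conjTranspose, Matrix.mul_assoc,
    Matrix.star_eq_conjTranspose]
  congr 3
  funext i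
  simp

lemma psd_sqrt_mul_self {n : Type*} [Fintype n] [DecidableEq n]
    {A : Matrix n n ℂ} (hA : A.PosSemidef) : hA.sqrt * hA.sqrt = A := by
  unfold Matrix.PosSemidef.sqrt
  have hU : (star hA.1.eigenvectorUnitary : Matrix n n ℂ) * (hA.1.eigenvectorUnitary : Matrix n n ℂ) = 1 :=
    Unitary.coe_star_mul_self _
  have hD : diagonal (fun i => ((Real.sqrt (hA.1.eigenvalues i) : ℝ) : ℂ)) *
      diagonal (fun i => ((Real.sqrt (hA.1.eigenvalues i) : ℝ) : ℂ))
      = diagonal (RCLike.ofReal ∘ hA.1.eigenvalues) := by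
    rw [diagonal_mul_diagonal]
    congr 1; funext i
    simp only [Function.comp_apply]
    rw [← Complex.ofReal_mul, Real.mul_self_sqrt (hA.eigenvalues_nonneg i)]
    rfl
  conv_rhs => rw [hA.1.spectral_theorem]
  rw [Unitary.conjStarAlgAut_apply, ← hD]
  simp only [Matrix.mul_assoc]
  rw [← Matrix.mul_assoc (star _ : Matrix n n ℂ) _ _, hU, Matrix.one_mul]

lemma prod_sum_swap {D : ℕ} {M : Type*} [AddCommMonoid M] (h : Fin D × Fin D → M) :
    ∑ p : Fin D × Fin D, h p = ∑ j : Fin D, ∑ i : Fin D, h (i, j) := by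
  rw [Fintype.sum_prod_type]; exact Finset.sum_comm

lemma trace_cs {D : ℕ} (A B : Matrix (Fin D) (Fin D) ℂ) :
    ‖(Aᴴ * B).trace‖
      ≤ Real.sqrt ((Aᴴ * A).trace.re) * Real.sqrt ((Bᴴ * B).trace.re) := by
  let f : EuclideanSpace ℂ (Fin D × Fin D) := WithLp.toLp 2 (fun p => A p.1 p.2)
  let g : EuclideanSpace ℂ (Fin D × Fin D) := WithLp.toLp 2 (fun p => B p.1 p.2)
  have key : ∀ (M : Matrix (Fin D) (Fin D) ℂ) (v : EuclideanSpace ℂ (Fin D × Fin D)),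
      (∀ p : Fin D × Fin D, v p = M p.1 p.2) →
      ((Mᴴ * M).trace.re) = ‖v‖ ^ 2 := by
    intro M v hv
    rw [EuclideanSpace.norm_eq, Real.sq_sqrt (by positivity), prod_sum_swap]
    rw [Matrix.trace, Complex.re_sum]
    refine Finset.sum_congr rfl fun j _ => ?_
    simp only [Matrix.diag, Matrix.mul_apply, Matrix.conjTranspose_apply, Complex.re_sum, hv]
    refine Finset.sum_congr rfl fun i _ => ?_
    simp [Complex.mul_re, Complex.sq_norm, Complex.normSq_apply]

  have hinner : (inner ℂ f g : ℂ) = (Aᴴ * B).trace := by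
    simp only [PiLp.inner_apply, RCLike.inner_apply, Matrix.trace, Matrix.diag,
      Matrix.mul_apply, Matrix.conjTranspose_apply]
    rw [prod_sum_swap]
    exact Finset.sum_congr rfl fun j _ => Finset.sum_congr rfl fun i _ => mul_comm _ _
  have h := norm_inner_le_norm (𝕜 := ℂ) f g
  rw [hinner] at h
  calc ‖(Aᴴ * B).trace‖ = ‖(Aᴴ * B).trace‖ := rfl
    _ ≤ ‖f‖ * ‖g‖ := h
    _ = Real.sqrt ((Aᴴ * A).trace.re) * Real.sqrt ((Bᴴ * B).trace.re) := by
        rw [key A f (fun p => rfl), key B g (fun p => rfl)]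
        rw [Real.sqrt_sq (norm_nonneg _), Real.sqrt_sq (norm_nonneg _)]

/-- The statistical overlap of the outcome distributions of any POVM measurement on
two density matrices is bounded below by `|tr(ρ0^{1/2} ρ1^{1/2})|`. -/
theorem statistical_overlap_ge_abs_trace_sqrt_mul_sqrt {D n : ℕ}
    (ρ0 ρ1 : Matrix (Fin D) (Fin D) ℂ)
    (hρ0 : ρ0.PosSemidef) (hρ1 : ρ1.PosSemidef)
    (hρ0t : ρ0.trace = 1) (hρ1t : ρ1.trace = 1)
    (E : Fin n → Matrix (Fin D) (Fin D) ℂ)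
    (hE : ∀ b, (E b).PosSemidef) (hEsum : ∑ b, E b = 1) :
    ‖(hρ0.sqrt * hρ1.sqrt).trace‖
      ≤ ∑ b, Real.sqrt (((ρ0 * E b).trace).re) * Real.sqrt (((ρ1 * E b).trace).re) := by
  set S0 := hρ0.sqrt with hS0
  set S1 := hρ1.sqrt with hS1
  have hsplit : (S0 * S1).trace = ∑ b, (S0 * E b * S1).trace := by
    rw [← Matrix.trace_sum]
    congr 1
    calc S0 * S1 = S0 * (∑ b, E b) * S1 := by rw [hEsum, mul_one]
      _ = ∑ b, S0 * E b * S1 := by rw [Finset.mul_sum, Finset.sum_mul]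
  have hterm : ∀ b, ‖(S0 * E b * S1).trace‖
      ≤ Real.sqrt (((ρ0 * E b).trace).re) * Real.sqrt (((ρ1 * E b).trace).re) := by
    intro b
    set F := (hE b).sqrt with hF
    have hFh : Fᴴ = F := psd_sqrt_conjTranspose (hE b)
    have hS0h : S0ᴴ = S0 := psd_sqrt_conjTranspose hρ0
    have hS1h : S1ᴴ = S1 := psd_sqrt_conjTranspose hρ1
    have hFm : F * F = E b := psd_sqrt_mul_self (hE b)
    have hs0m : S0 * S0 = ρ0 := psd_sqrt_mul_self hρ0
    have hs1m : S1 * S1 = ρ1 := psd_sqrt_mul_self hρ1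
    have hAB : (F * S0)ᴴ * (F * S1) = S0 * E b * S1 := by
      rw [Matrix.conjTranspose_mul, hFh, hS0h, ← hFm]
      simp only [Matrix.mul_assoc]
    have hAA : ((F * S0)ᴴ * (F * S0)).trace = (ρ0 * E b).trace := by
      rw [Matrix.conjTranspose_mul, hFh, hS0h, ← Matrix.mul_assoc _ F S0,
        Matrix.mul_assoc S0 F F, hFm, Matrix.trace_mul_comm, ← Matrix.mul_assoc, hs0m]
    have hBB : ((F * S1)ᴴ * (F * S1)).trace = (ρ1 * E b).trace := by
      rw [Matrix.conjTranspose_mul, hFh, hS1h, ← Matrix.mul_assoc _ F S1,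
        Matrix.mul_assoc S1 F F, hFm, Matrix.trace_mul_comm, ← Matrix.mul_assoc, hs1m]
    have := trace_cs (F * S0) (F * S1)
    rwa [hAB, hAA, hBB] at this
  calc ‖(S0 * S1).trace‖
      = ‖∑ b, (S0 * E b * S1).trace‖ := by rw [hsplit]
    _ ≤ ∑ b, ‖(S0 * E b * S1).trace‖ := norm_sum_le _ _
    _ ≤ ∑ b, Real.sqrt (((ρ0 * E b).trace).re) * Real.sqrt (((ρ1 * E b).trace).re) :=
        Finset.sum_le_sum fun b _ => hterm b
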